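/- Let Φ ⊆ V* be a finite root system with base Δ and positive roots Φ⁺ as in the context, and let J ⊆ Δ be a subset containing no connected component of the Dynkin diagram of Δ. Let W ≤ GL(V) be the Weyl group, generated by the reflections s_α : x ↦ x − ⟨α, x⟩α∨ for α ∈ Φ, and let W_J = ⟨s_α : α ∈ J⟩. Let C̄ = {x ∈ V : ⟨α, x⟩ ≥ 0 for all α ∈ Δ} be the closed dominant Weyl chamber. Then {x ∈ V : ⟨α, x⟩ ≥ 0 for every α ∈ Φ⁺ with α ∉ span_ℝ(J)} = ⋃_{w ∈ W_J} w(C̄). -/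

import Mathlib

variable {V : Type*} [AddCommGroup V] [Module ℝ V]

/-- The data of a finite (possibly non-reduced) root system `Φ` in the dual of the real
vector space `V`: every root `α` has a coroot `α∨` with `⟨α, α∨⟩ = 2`, the reflections
`s_α : χ ↦ χ - ⟨χ, α∨⟩ α` preserve `Φ`, and all pairings `⟨β, α∨⟩` are integers. -/
structure RootSystemData (V : Type*) [AddCommGroup V] [Module ℝ V] where
  Φ : Finset (Module.Dual ℝ V)
  coroot : Module.Dual ℝ V → V
  pairing_self : ∀ α ∈ Φ, α (coroot α) = 2
  reflection_mem : ∀ α ∈ Φ, ∀ β ∈ Φ, β - β (coroot α) • α ∈ Φ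
  pairing_int : ∀ α ∈ Φ, ∀ β ∈ Φ, ∃ m : ℤ, β (coroot α) = (m : ℝ)

/-- `Δ` is a base (system of simple roots) of the root system: it is linearly independent
and every root is either a nonnegative-integer or a nonpositive-integer combination of
elements of `Δ`. -/
structure RootSystemData.IsBase (R : RootSystemData V) (Δ : Finset (Module.Dual ℝ V)) :
    Prop where
  subset : Δ ⊆ R.Φ
  linearIndependent :
    LinearIndependent ℝ (fun a : (Δ : Set (Module.Dual ℝ V)) => (a : Module.Dual ℝ V))
  decomposition : ∀ α ∈ R.Φ,
    (∃ c : Module.Dual ℝ V → ℕ, α = ∑ β ∈ Δ, (c β : ℝ) • β) ∨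
    (∃ c : Module.Dual ℝ V → ℕ, α = -∑ β ∈ Δ, (c β : ℝ) • β)

/-- The set of positive roots with respect to the base `Δ`: the roots which are
nonnegative-integer combinations of simple roots. -/
def RootSystemData.posRoots (R : RootSystemData V) (Δ : Finset (Module.Dual ℝ V)) :
    Set (Module.Dual ℝ V) :=
  {α | α ∈ R.Φ ∧ ∃ c : Module.Dual ℝ V → ℕ, α = ∑ β ∈ Δ, (c β : ℝ) • β}

/-- The Dynkin diagram of the base `Δ`: two distinct simple roots are adjacent if and
only if they pair nontrivially against each other's coroots. -/
def RootSystemData.dynkin (R : RootSystemData V) (Δ : Finset (Module.Dual ℝ V)) :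
    SimpleGraph {a // a ∈ Δ} where
  Adj a b := a ≠ b ∧
    ((a : Module.Dual ℝ V) (R.coroot (b : Module.Dual ℝ V)) ≠ 0 ∨
      (b : Module.Dual ℝ V) (R.coroot (a : Module.Dual ℝ V)) ≠ 0)
  symm := ⟨fun a b h => ⟨h.1.symm, h.2.symm⟩⟩
  loopless := ⟨fun a h => h.1 rfl⟩

/-- The subgroup of `GL(V)` generated by the reflections `s_α : x ↦ x - ⟨α, x⟩ α∨`
for `α` ranging in a set `s` of roots. -/
def RootSystemData.weylSubgroup (R : RootSystemData V) (s : Set (Module.Dual ℝ V)) :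
    Subgroup (V ≃ₗ[ℝ] V) :=
  Subgroup.closure {w : V ≃ₗ[ℝ] V | ∃ α ∈ s, ∀ x : V, w x = x - α x • R.coroot α}

namespace Scratch
open Module
open scoped Classical

variable (R : RootSystemData V) {Δ J : Finset (Module.Dual ℝ V)}

lemma coeff_eq_zero (hΔ : R.IsBase Δ) (f : Module.Dual ℝ V → ℝ)
    (h : ∑ β ∈ Δ, f β • β = 0) : ∀ β ∈ Δ, f β = 0 := by
  intro β hβ
  have hli := Fintype.linearIndependent_iff.mp hΔ.linearIndependent (fun a => f ↑a)
  have hsum : ∑ a : (Δ : Set (Module.Dual ℝ V)), f ↑a • (a : Module.Dual ℝ V) = 0 := by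
    rw [Finset.sum_finset_coe (fun b => f b • b) Δ]; exact h
  exact hli hsum ⟨β, hβ⟩

lemma pos_of_coeff (hΔ : R.IsBase Δ) {α : Module.Dual ℝ V} (hα : α ∈ R.Φ)
    (r : Module.Dual ℝ V → ℝ) (hr : α = ∑ β ∈ Δ, r β • β)
    {γ : Module.Dual ℝ V} (hγ : γ ∈ Δ) (hpos : 0 < r γ) : α ∈ R.posRoots Δ := by
  rcases hΔ.decomposition α hα with ⟨c, hc⟩ | ⟨c, hc⟩
  · exact ⟨hα, c, hc⟩
  · exfalso
    have h0 : ∑ β ∈ Δ, (r β + (c β : ℝ)) • β = 0 := by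
      simp only [add_smul, Finset.sum_add_distrib, ← hr]
      rw [hc]; abel
    have h1 := coeff_eq_zero R hΔ _ h0 γ hγ
    have h2 : (0:ℝ) ≤ (c γ : ℝ) := Nat.cast_nonneg _
    linarith

lemma notin_span (hΔ : R.IsBase Δ) {s : Finset (Module.Dual ℝ V)} (hs : s ⊆ Δ)
    {γ : Module.Dual ℝ V} (hγ : γ ∈ Δ) (hγs : γ ∉ s) :
    γ ∉ Submodule.span ℝ (s : Set (Module.Dual ℝ V)) := by
  have h := hΔ.linearIndependent.notMem_span_image (R := ℝ)
    (s := {a : (Δ : Set (Module.Dual ℝ V)) | (a : Module.Dual ℝ V) ∈ s})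
    (x := ⟨γ, hγ⟩) (by simpa using hγs)
  have himg : (fun a : (Δ : Set (Module.Dual ℝ V)) => (a : Module.Dual ℝ V)) ''
      {a : (Δ : Set (Module.Dual ℝ V)) | (a : Module.Dual ℝ V) ∈ s}
      = (s : Set (Module.Dual ℝ V)) := by
    ext m
    constructor
    · rintro ⟨a, ha, rfl⟩; exact ha
    · intro hm; exact ⟨⟨m, hs hm⟩, hm, rfl⟩
  rwa [himg] at h

lemma simple_pos (hΔ : R.IsBase Δ) {γ : Module.Dual ℝ V} (hγ : γ ∈ Δ) :
    γ ∈ R.posRoots Δ := by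
  refine ⟨hΔ.subset hγ, fun δ => if δ = γ then 1 else 0, ?_⟩
  have h1 : ∀ δ ∈ Δ, ((if δ = γ then (1:ℕ) else 0 : ℕ) : ℝ) • δ
      = if δ = γ then γ else 0 := by
    intro δ _
    by_cases h : δ = γ <;> simp [h]
  rw [Finset.sum_congr rfl h1, Finset.sum_ite_eq' Δ γ (fun _ => γ), if_pos hγ]

lemma exists_coeff_out (hΔ : R.IsBase Δ) {α : Module.Dual ℝ V} (hα : α ∈ R.posRoots Δ)
    {s : Finset (Module.Dual ℝ V)} (hs : s ⊆ Δ)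
    (hns : α ∉ Submodule.span ℝ (s : Set (Module.Dual ℝ V))) :
    ∃ c : Module.Dual ℝ V → ℕ, α = ∑ β ∈ Δ, (c β : ℝ) • β ∧
      ∃ γ ∈ Δ, γ ∉ s ∧ 0 < c γ := by
  obtain ⟨hαΦ, c, hc⟩ := hα
  refine ⟨c, hc, ?_⟩
  by_contra hno
  push_neg at hno
  apply hns
  have hsum : α = ∑ β ∈ s, (c β : ℝ) • β := by
    rw [hc]
    refine (Finset.sum_subset hs ?_).symm
    intro β hβ hβs
    have : c β = 0 := Nat.le_zero.mp (hno β hβ hβs)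
    simp [this]
  rw [hsum]
  exact Submodule.sum_mem _ fun β hβ =>
    Submodule.smul_mem _ _ (Submodule.subset_span hβ)

lemma sum_sub_single {β : Module.Dual ℝ V} (hβΔ : β ∈ Δ) (c : Module.Dual ℝ V → ℝ)
    (t : ℝ) :
    ∑ δ ∈ Δ, ((c δ) - if δ = β then t else 0) • δ = (∑ δ ∈ Δ, c δ • δ) - t • β := by
  have h1 : ∀ δ ∈ Δ, ((c δ) - if δ = β then t else 0) • δ
      = c δ • δ - (if δ = β then t • β else 0) := by
    intro δ _
    rcases eq_or_ne δ β with h | h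
    · subst h; rw [if_pos rfl, if_pos rfl]; module
    · rw [if_neg h, if_neg h, sub_zero, sub_zero]
  rw [Finset.sum_congr rfl h1, Finset.sum_sub_distrib,
    Finset.sum_ite_eq' Δ β (fun _ => t • β), if_pos hβΔ]

lemma sigma_pos (hΔ : R.IsBase Δ) {β : Module.Dual ℝ V} (hβΔ : β ∈ Δ)
    {α : Module.Dual ℝ V} (hΦ' : α - α (R.coroot β) • β ∈ R.Φ)
    (c : Module.Dual ℝ V → ℕ) (hc : α = ∑ δ ∈ Δ, (c δ : ℝ) • δ)
    {γ : Module.Dual ℝ V} (hγΔ : γ ∈ Δ) (hγβ : γ ≠ β) (hcγ : 0 < c γ) :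
    α - α (R.coroot β) • β ∈ R.posRoots Δ := by
  set k : ℝ := α (R.coroot β) with hk
  refine pos_of_coeff R hΔ hΦ' (fun δ => (c δ : ℝ) - if δ = β then k else 0) ?_ hγΔ ?_
  · rw [sum_sub_single hβΔ (fun δ => ((c δ : ℝ))) k, ← hc]
  · simp only [if_neg hγβ, sub_zero]
    exact_mod_cast hcγ

lemma sigma_good (hΔ : R.IsBase Δ) (hJ : J ⊆ Δ) {β : Module.Dual ℝ V} (hβJ : β ∈ J)
    {α : Module.Dual ℝ V} (hα : α ∈ R.posRoots Δ)
    (hαs : α ∉ Submodule.span ℝ (J : Set (Module.Dual ℝ V))) :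
    (α - α (R.coroot β) • β ∈ R.posRoots Δ) ∧
      (α - α (R.coroot β) • β ∉ Submodule.span ℝ (J : Set (Module.Dual ℝ V))) := by
  have hβΔ : β ∈ Δ := hJ hβJ
  have hΦ' : α - α (R.coroot β) • β ∈ R.Φ :=
    R.reflection_mem β (hΔ.subset hβΔ) α hα.1
  obtain ⟨c, hc, γ, hγΔ, hγJ, hcγ⟩ := exists_coeff_out R hΔ hα hJ hαs
  have hγβ : γ ≠ β := fun h => hγJ (h ▸ hβJ)
  refine ⟨sigma_pos R hΔ hβΔ hΦ' c hc hγΔ hγβ hcγ, fun hmem => hαs ?_⟩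
  have hβspan : β ∈ Submodule.span ℝ (J : Set (Module.Dual ℝ V)) :=
    Submodule.subset_span (by exact_mod_cast hβJ)
  have hrw : α = (α - α (R.coroot β) • β) + α (R.coroot β) • β := by abel
  rw [hrw]
  exact Submodule.add_mem _ hmem (Submodule.smul_mem _ _ hβspan)

lemma pos_eval (hΔ : R.IsBase Δ) {α : Module.Dual ℝ V} (hα : α ∈ R.posRoots Δ)
    {z : V} (hz : ∀ γ ∈ Δ, 0 ≤ γ z) : 0 ≤ α z := by
  obtain ⟨-, c, hc⟩ := hα
  rw [hc]
  simp only [LinearMap.coe_sum, Finset.sum_apply, LinearMap.smul_apply, smul_eq_mul]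
  exact Finset.sum_nonneg fun β hβ => mul_nonneg (Nat.cast_nonneg _) (hz β hβ)

lemma card_lt (hΔ : R.IsBase Δ) (hJ : J ⊆ Δ) {β : Module.Dual ℝ V} (hβJ : β ∈ J)
    {y : V} (hβy : β y < 0) :
    (R.Φ.filter fun α => α ∈ R.posRoots Δ ∧
        α ∈ Submodule.span ℝ (J : Set (Module.Dual ℝ V)) ∧
        α (y - β y • R.coroot β) < 0).card <
      (R.Φ.filter fun α => α ∈ R.posRoots Δ ∧
        α ∈ Submodule.span ℝ (J : Set (Module.Dual ℝ V)) ∧ α y < 0).card := by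
  have hβΔ : β ∈ Δ := hJ hβJ
  have hβΦ : β ∈ R.Φ := hΔ.subset hβΔ
  have h2 : β (R.coroot β) = 2 := R.pairing_self β hβΦ
  set σ : Module.Dual ℝ V → Module.Dual ℝ V :=
    fun α => α - α (R.coroot β) • β with hσdef
  have hσσ : ∀ α : Module.Dual ℝ V, σ (σ α) = α := by
    intro α
    show (α - α (R.coroot β) • β) - ((α - α (R.coroot β) • β) (R.coroot β)) • β = α
    rw [LinearMap.sub_apply, LinearMap.smul_apply, smul_eq_mul, h2]
    module
  have hinj : Function.Injective σ := Function.Involutive.injective hσσ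
  have heval : ∀ α : Module.Dual ℝ V, α (y - β y • R.coroot β) = (σ α) y := by
    intro α
    simp only [hσdef, map_sub, map_smul, LinearMap.sub_apply, LinearMap.smul_apply,
      smul_eq_mul]
    ring
  have hy'β : β (y - β y • R.coroot β) = - β y := by
    rw [map_sub, map_smul, smul_eq_mul, h2]; ring
  have partA : ∀ α : Module.Dual ℝ V, α ∈ R.posRoots Δ →
      α (y - β y • R.coroot β) < 0 →
      α ∉ Submodule.span ℝ (({β} : Finset (Module.Dual ℝ V)) : Set (Module.Dual ℝ V)) := by
    intro α hαpos hαy' hspan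
    rw [Finset.coe_singleton] at hspan
    obtain ⟨t, ht⟩ := Submodule.mem_span_singleton.mp hspan
    have htneg : t < 0 := by
      have h1 : α (y - β y • R.coroot β) = t * (- β y) := by
        rw [← ht, LinearMap.smul_apply, smul_eq_mul, hy'β]
      nlinarith [h1 ▸ hαy']
    obtain ⟨-, c, hc⟩ := hαpos
    have h0 := sum_sub_single (Δ := Δ) hβΔ (fun δ => ((c δ : ℝ))) t
    rw [← hc, ht, sub_self] at h0
    have h3 := coeff_eq_zero R hΔ _ h0 β hβΔ
    rw [if_pos rfl] at h3
    have h4 : (c β : ℝ) = t := by linarith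
    have h5 : (0:ℝ) ≤ t := h4 ▸ Nat.cast_nonneg _
    linarith
  have hσβ : σ β = - β := by
    show β - β (R.coroot β) • β = - β
    rw [h2]; module
  have partB : (R.Φ.filter fun α => α ∈ R.posRoots Δ ∧
      α ∈ Submodule.span ℝ (J : Set (Module.Dual ℝ V)) ∧
      α (y - β y • R.coroot β) < 0).image σ ⊆
      ((R.Φ.filter fun α => α ∈ R.posRoots Δ ∧
        α ∈ Submodule.span ℝ (J : Set (Module.Dual ℝ V)) ∧ α y < 0).erase β) := by
    intro α' hα'
    obtain ⟨α, hαmem, rfl⟩ := Finset.mem_image.mp hα'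
    obtain ⟨hαΦ, hαpos, hαspanJ, hαy'⟩ := Finset.mem_filter.mp hαmem
    have hnsβ := partA α hαpos hαy'
    have hσΦ : σ α ∈ R.Φ := R.reflection_mem β hβΦ α hαΦ
    obtain ⟨c, hc, γ, hγΔ, hγs, hcγ⟩ := exists_coeff_out R hΔ hαpos
      (Finset.singleton_subset_iff.mpr hβΔ) hnsβ
    have hγβ : γ ≠ β := by simpa using hγs
    have hσpos : σ α ∈ R.posRoots Δ := sigma_pos R hΔ hβΔ hσΦ c hc hγΔ hγβ hcγ
    have hβspan : β ∈ Submodule.span ℝ (J : Set (Module.Dual ℝ V)) :=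
      Submodule.subset_span (by exact_mod_cast hβJ)
    have hσspan : σ α ∈ Submodule.span ℝ (J : Set (Module.Dual ℝ V)) :=
      Submodule.sub_mem _ hαspanJ (Submodule.smul_mem _ _ hβspan)
    have hσy : (σ α) y < 0 := by rw [← heval]; exact hαy'
    refine Finset.mem_erase.mpr ⟨?_, Finset.mem_filter.mpr ⟨hσΦ, hσpos, hσspan, hσy⟩⟩
    intro hσeq
    apply hnsβ
    have hαβ : α = - β := by
      have h6 := congrArg σ hσeq
      rw [hσσ, hσβ] at h6
      exact h6
    rw [hαβ, Finset.coe_singleton]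
    exact Submodule.neg_mem _ (Submodule.subset_span (Set.mem_singleton β))
  have partC : β ∈ R.Φ.filter fun α => α ∈ R.posRoots Δ ∧
      α ∈ Submodule.span ℝ (J : Set (Module.Dual ℝ V)) ∧ α y < 0 := by
    refine Finset.mem_filter.mpr ⟨hβΦ, simple_pos R hΔ hβΔ, ?_, hβy⟩
    exact Submodule.subset_span (by exact_mod_cast hβJ)
  calc (R.Φ.filter fun α => α ∈ R.posRoots Δ ∧
        α ∈ Submodule.span ℝ (J : Set (Module.Dual ℝ V)) ∧
        α (y - β y • R.coroot β) < 0).card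
      = ((R.Φ.filter fun α => α ∈ R.posRoots Δ ∧
        α ∈ Submodule.span ℝ (J : Set (Module.Dual ℝ V)) ∧
        α (y - β y • R.coroot β) < 0).image σ).card :=
        (Finset.card_image_of_injective _ hinj).symm
    _ ≤ _ := Finset.card_le_card partB
    _ < _ := Finset.card_erase_lt_of_mem partC

lemma weyl_good (hΔ : R.IsBase Δ) (hJ : J ⊆ Δ) {w : V ≃ₗ[ℝ] V}
    (hw : w ∈ Subgroup.closure {u : V ≃ₗ[ℝ] V |
      ∃ α ∈ (J : Set (Module.Dual ℝ V)), ∀ x : V, u x = x - α x • R.coroot α}) :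
    ∀ α : Module.Dual ℝ V, α ∈ R.posRoots Δ →
      α ∉ Submodule.span ℝ (J : Set (Module.Dual ℝ V)) →
      (α ∘ₗ (w : V →ₗ[ℝ] V) ∈ R.posRoots Δ ∧
        α ∘ₗ (w : V →ₗ[ℝ] V) ∉ Submodule.span ℝ (J : Set (Module.Dual ℝ V))) := by
  set Good : (V ≃ₗ[ℝ] V) → Prop := fun u =>
    ∀ α : Module.Dual ℝ V, α ∈ R.posRoots Δ →
      α ∉ Submodule.span ℝ (J : Set (Module.Dual ℝ V)) →
      (α ∘ₗ (u : V →ₗ[ℝ] V) ∈ R.posRoots Δ ∧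
        α ∘ₗ (u : V →ₗ[ℝ] V) ∉ Submodule.span ℝ (J : Set (Module.Dual ℝ V))) with hGood
  suffices h : Good w ∧ Good w⁻¹ from h.1
  induction hw using Subgroup.closure_induction with
  | mem g hg =>
    obtain ⟨β, hβJ, hgx⟩ := hg
    have hβJ' : β ∈ J := by exact_mod_cast hβJ
    have h2 : β (R.coroot β) = 2 := R.pairing_self β (hΔ.subset (hJ hβJ'))
    have hcomp : ∀ α : Module.Dual ℝ V,
        α ∘ₗ (g : V →ₗ[ℝ] V) = α - α (R.coroot β) • β := by
      intro α
      ext v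
      rw [LinearMap.comp_apply]
      simp only [LinearEquiv.coe_coe, hgx v, map_sub, map_smul, LinearMap.sub_apply,
        LinearMap.smul_apply, smul_eq_mul]
      ring
    have hGoodg : Good g := by
      intro α hp hs
      rw [hcomp]
      exact sigma_good R hΔ hJ hβJ' hp hs
    have hinv : g⁻¹ = g := by
      refine inv_eq_of_mul_eq_one_right ?_
      apply LinearEquiv.ext
      intro v
      show g (g v) = v
      rw [hgx, hgx, map_sub, map_smul, smul_eq_mul, h2]
      module
    exact ⟨hGoodg, by rw [hinv]; exact hGoodg⟩
  | one =>
    constructor <;>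
    · intro α hp hs
      have : α ∘ₗ ((1 : V ≃ₗ[ℝ] V) : V →ₗ[ℝ] V) = α := by
        ext v; simp
      simp only [inv_one, this]
      exact ⟨hp, hs⟩
  | mul u v hu hv hu' hv' =>
    have key : ∀ a b : V ≃ₗ[ℝ] V, Good a → Good b → Good (a * b) := by
      intro a b ha hb α hp hs
      have hcomp : α ∘ₗ ((a * b : V ≃ₗ[ℝ] V) : V →ₗ[ℝ] V)
          = (α ∘ₗ (a : V →ₗ[ℝ] V)) ∘ₗ (b : V →ₗ[ℝ] V) := by
        ext x; rfl
      rw [hcomp]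
      obtain ⟨h1, h2⟩ := ha α hp hs
      exact hb _ h1 h2
    exact ⟨key u v hu'.1 hv'.1, by rw [mul_inv_rev]; exact key _ _ hv'.2 hu'.2⟩
  | inv u hu hu' =>
    exact ⟨hu'.2, by rw [inv_inv]; exact hu'.1⟩

end Scratch

open Scratch in
/-- Let `Φ` be a root system with base `Δ`, and let `J ⊆ Δ` contain no connected
component of the Dynkin diagram of `Δ`. Then the set of points on which every positive
root not lying in the span of `J` is nonnegative equals the union of the images of the
closed dominant Weyl chamber under the subgroup `W_J` generated by the simple
reflections `s_α`, `α ∈ J`. -/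
theorem cone_eq_unionWeylTranslates [FiniteDimensional ℝ V]
    (R : RootSystemData V) {Δ : Finset (Module.Dual ℝ V)} (hΔ : R.IsBase Δ)
    {J : Finset (Module.Dual ℝ V)} (hJ : J ⊆ Δ)
    (hJcomp : ∀ a : {a // a ∈ Δ}, ∃ b : {a // a ∈ Δ},
      (R.dynkin Δ).Reachable a b ∧ (b : Module.Dual ℝ V) ∉ J) :
    {x : V | ∀ α ∈ R.posRoots Δ,
        α ∉ Submodule.span ℝ (J : Set (Module.Dual ℝ V)) → 0 ≤ α x} =
      ⋃ w ∈ R.weylSubgroup (J : Set (Module.Dual ℝ V)),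
        (w : V → V) '' {x : V | ∀ α ∈ Δ, 0 ≤ α x} := by
  classical
  ext x
  simp only [Set.mem_setOf_eq, Set.mem_iUnion, Set.mem_image, exists_prop]
  constructor
  · intro hx
    suffices main : ∀ (n : ℕ) (y : V),
        (R.Φ.filter fun α => α ∈ R.posRoots Δ ∧
          α ∈ Submodule.span ℝ (J : Set (Module.Dual ℝ V)) ∧ α y < 0).card ≤ n →
        (∀ α ∈ R.posRoots Δ,
          α ∉ Submodule.span ℝ (J : Set (Module.Dual ℝ V)) → 0 ≤ α y) →
        ∃ w ∈ Subgroup.closure {u : V ≃ₗ[ℝ] V |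
          ∃ α ∈ (J : Set (Module.Dual ℝ V)), ∀ x : V, u x = x - α x • R.coroot α},
          ∃ z, (∀ γ ∈ Δ, 0 ≤ γ z) ∧ w z = y by
      obtain ⟨w, hw, z, hz, hzy⟩ := main _ x le_rfl hx
      exact ⟨w, hw, z, hz, hzy⟩
    intro n
    induction n with
    | zero =>
      intro y hcard hy
      refine ⟨1, one_mem _, y, ?_, ?_⟩
      · intro γ hγ
        by_cases hγJ : γ ∈ J
        · by_contra hneg
          push_neg at hneg
          have hmem : γ ∈ R.Φ.filter fun α => α ∈ R.posRoots Δ ∧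
              α ∈ Submodule.span ℝ (J : Set (Module.Dual ℝ V)) ∧ α y < 0 :=
            Finset.mem_filter.mpr ⟨hΔ.subset hγ, simple_pos R hΔ hγ,
              Submodule.subset_span (by exact_mod_cast hγJ), hneg⟩
          have := Finset.card_pos.mpr ⟨γ, hmem⟩
          omega
        · exact hy γ (simple_pos R hΔ hγ) (notin_span R hΔ hJ hγ hγJ)
      · rfl
    | succ n ih =>
      intro y hcard hy
      by_cases hall : ∀ β ∈ J, 0 ≤ β y
      · refine ⟨1, one_mem _, y, ?_, rfl⟩
        intro γ hγ
        by_cases hγJ : γ ∈ J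
        · exact hall γ hγJ
        · exact hy γ (simple_pos R hΔ hγ) (notin_span R hΔ hJ hγ hγJ)
      · push_neg at hall
        obtain ⟨β, hβJ, hβy⟩ := hall
        have h2 : β (R.coroot β) = 2 := R.pairing_self β (hΔ.subset (hJ hβJ))
        set g : V ≃ₗ[ℝ] V := Module.reflection h2 with hgdef
        have hgapp : ∀ v : V, g v = v - β v • R.coroot β := by
          intro v; rw [hgdef]; exact Module.reflection_apply v h2
        have hlt := card_lt R hΔ hJ hβJ hβy
        have hy'cond : ∀ α ∈ R.posRoots Δ,
            α ∉ Submodule.span ℝ (J : Set (Module.Dual ℝ V)) →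
            0 ≤ α (y - β y • R.coroot β) := by
          intro α hp hs
          have hg' := sigma_good R hΔ hJ hβJ hp hs
          have he : α (y - β y • R.coroot β) = (α - α (R.coroot β) • β) y := by
            simp only [map_sub, map_smul, LinearMap.sub_apply, LinearMap.smul_apply,
              smul_eq_mul]
            ring
          rw [he]
          exact hy _ hg'.1 hg'.2
        obtain ⟨w, hw, z, hz, hzy⟩ := ih (y - β y • R.coroot β) (by omega) hy'cond
        refine ⟨g * w, mul_mem (Subgroup.subset_closure
          ⟨β, by exact_mod_cast hβJ, hgapp⟩) hw, z, hz, ?_⟩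
        show g (w z) = y
        rw [hzy]
        have hyy : y - β y • R.coroot β = g y := (hgapp y).symm
        rw [hyy, hgdef]
        exact Module.involutive_reflection h2 y
  · rintro ⟨w, hw, z, hz, rfl⟩
    intro α hp hs
    have hg := weyl_good R hΔ hJ hw α hp hs
    have he : α (w z) = (α ∘ₗ (w : V →ₗ[ℝ] V)) z := rfl
    rw [he]
    exact pos_eval R hΔ hg.1 hz
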